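/- arXiv:2307.11440 — 2 statements merged into one kernel-verified Lean document; each statement's English description precedes it below -/
import Mathlib

section
/- Let p be a prime with p ≡ 1 (mod 4). Then the fundamental unit of ℚ(√p) has norm −1; equivalently, the equation x² − p y² = −4 (or −1 in appropriate integers of ℚ(√p)) has a solution, so there exists a unit of norm −1 in the ring of integers of ℚ(√p). -/
open NumberField

private lemma sq_mod_four (n : ℤ) : n ^ 2 % 4 = 0 ∨ n ^ 2 % 4 = 1 := by
  rcases Int.even_or_odd n with ⟨k, rfl⟩ | ⟨k, rfl⟩
  · have h : (k + k) ^ 2 = 4 * (k * k) := by ring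
    omega
  · have h : (2 * k + 1) ^ 2 = 4 * (k * k + k) + 1 := by ring
    omega

set_option maxHeartbeats 1000000 in
/-- The negative Pell equation has a solution when `p ≡ 1 (mod 4)` is prime. -/
private lemma neg_pell (p : ℕ) (hp : p.Prime) (h4 : p % 4 = 1) :
    ∃ a b : ℤ, a ^ 2 - (p : ℤ) * b ^ 2 = -1 := by
  classical
  have hpz : Prime (p : ℤ) := Nat.prime_iff_prime_int.mp hp
  have hns : ¬IsSquare ((p : ℤ)) := hpz.not_isSquare
  have h0 : (0 : ℤ) < p := by exact_mod_cast hp.pos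
  have hp5 : 5 ≤ p := by have := hp.two_le; omega
  have hex : ∃ n : ℕ, 0 < n ∧ ∃ x : ℤ, 0 ≤ x ∧ x ^ 2 - (p : ℤ) * (n : ℤ) ^ 2 = 1 := by
    obtain ⟨x, y, h, hy⟩ := Pell.exists_of_not_isSquare h0 hns
    refine ⟨y.natAbs, Int.natAbs_pos.mpr hy, |x|, abs_nonneg x, ?_⟩
    rw [sq_abs, Int.natCast_natAbs, sq_abs]
    exact h
  obtain ⟨y, ⟨hy0, x, hx0, hxy⟩, hmin⟩ :
      ∃ y : ℕ, (0 < y ∧ ∃ x : ℤ, 0 ≤ x ∧ x ^ 2 - (p : ℤ) * (y : ℤ) ^ 2 = 1) ∧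
        ∀ m, m < y → ¬(0 < m ∧ ∃ x : ℤ, 0 ≤ x ∧ x ^ 2 - (p : ℤ) * (m : ℤ) ^ 2 = 1) :=
    ⟨Nat.find hex, Nat.find_spec hex, fun m hm => Nat.find_min hex hm⟩
  have hY1 : 1 ≤ (y : ℤ) := by exact_mod_cast hy0
  obtain ⟨t, ht⟩ : ∃ t : ℕ, p = 4 * t + 1 := ⟨p / 4, by omega⟩
  have htZ : (p : ℤ) = 4 * (t : ℤ) + 1 := by exact_mod_cast ht
  have key : x ^ 2 = 1 + 4 * ((t : ℤ) * (y : ℤ) ^ 2) + (y : ℤ) ^ 2 := by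
    rw [htZ] at hxy; linarith [hxy]
  have hA := sq_mod_four x
  have hB := sq_mod_four (y : ℤ)
  -- x is odd
  obtain ⟨u, hu⟩ : ∃ u : ℤ, x = 2 * u + 1 := by
    rcases Int.even_or_odd x with ⟨k, rfl⟩ | ⟨k, hk⟩
    · exfalso
      have h1 : (k + k) ^ 2 = 4 * (k * k) := by ring
      omega
    · exact ⟨k, hk⟩
  -- Y is even
  obtain ⟨z, hz⟩ : ∃ z : ℤ, (y : ℤ) = 2 * z := by
    rcases Int.even_or_odd (y : ℤ) with ⟨k, hk⟩ | ⟨k, hk⟩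
    · exact ⟨k, by omega⟩
    · exfalso
      have h1 : (y : ℤ) ^ 2 = 4 * (k * k + k) + 1 := by rw [hk]; ring
      have h2 : x ^ 2 = 4 * (u * u + u) + 1 := by rw [hu]; ring
      omega
  have hz1 : 1 ≤ z := by omega
  have hfac : u * (u + 1) = (p : ℤ) * z ^ 2 := by
    rw [hu, hz] at hxy; nlinarith [hxy]
  have hu0 : 0 ≤ u := by omega
  have hu1 : 1 ≤ u := by
    rcases eq_or_lt_of_le hu0 with h | h
    · exfalso
      have : (0 : ℤ) = (p : ℤ) * z ^ 2 := by rw [← hfac, ← h]; ring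
      nlinarith
    · omega
  have hcop : IsCoprime u (u + 1) := ⟨-1, 1, by ring⟩
  have hdvd : (p : ℤ) ∣ u * (u + 1) := ⟨z ^ 2, hfac⟩
  rcases (Prime.dvd_mul hpz).mp hdvd with hdu | hdu1
  · -- p ∣ u : leads to a contradiction with minimality
    exfalso
    obtain ⟨c, hc⟩ := hdu
    have hc0 : 1 ≤ c := by nlinarith
    have hz2 : c * (u + 1) = z ^ 2 := by
      have h1 : (p : ℤ) * (c * (u + 1)) = (p : ℤ) * z ^ 2 := by rw [← hfac, hc]; ring
      exact mul_left_cancel₀ (by positivity) h1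
    have hcop1 : IsCoprime c (u + 1) := hcop.of_isCoprime_of_dvd_left ⟨(p : ℤ), by rw [hc]; ring⟩
    obtain ⟨b, hb⟩ := Int.sq_of_isCoprime hcop1 hz2
    have hb2 : c = b ^ 2 := by
      rcases hb with h | h
      · exact h
      · exfalso; nlinarith [sq_nonneg b]
    obtain ⟨a, ha⟩ := Int.sq_of_isCoprime hcop1.symm (by rw [mul_comm]; exact hz2)
    have ha2 : u + 1 = a ^ 2 := by
      rcases ha with h | h
      · exact h
      · exfalso; nlinarith [sq_nonneg a]
    have hb0 : b ≠ 0 := by intro h; rw [h] at hb2; simp at hb2; omega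
    have hnew : a ^ 2 - (p : ℤ) * b ^ 2 = 1 := by
      rw [← ha2, ← hb2, ← hc]; ring
    -- b.natAbs is a smaller solution
    have hbz : |b| < z := by
      have h1 : |b| ^ 2 < z ^ 2 := by
        rw [← hz2, sq_abs]
        nlinarith [sq_nonneg b, sq_nonneg a]
      exact lt_of_pow_lt_pow_left₀ 2 (by omega) h1
    have hblt : b.natAbs < y := by
      have h1 : (b.natAbs : ℤ) < (y : ℤ) := by rw [Int.natCast_natAbs]; omega
      exact_mod_cast h1
    refine hmin b.natAbs hblt ⟨Int.natAbs_pos.mpr hb0, |a|, abs_nonneg a, ?_⟩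
    rw [sq_abs, Int.natCast_natAbs, sq_abs]
    exact hnew
  · -- p ∣ u + 1 : the negative Pell equation has a solution
    obtain ⟨c, hc⟩ := hdu1
    have hc0 : 1 ≤ c := by nlinarith
    have hz2 : u * c = z ^ 2 := by
      have h1 : (p : ℤ) * (u * c) = (p : ℤ) * z ^ 2 := by rw [← hfac, hc]; ring
      exact mul_left_cancel₀ (by positivity) h1
    have hcop1 : IsCoprime u c := hcop.of_isCoprime_of_dvd_right ⟨(p : ℤ), by rw [hc]; ring⟩
    obtain ⟨a, ha⟩ := Int.sq_of_isCoprime hcop1 hz2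
    have ha2 : u = a ^ 2 := by
      rcases ha with h | h
      · exact h
      · exfalso; nlinarith [sq_nonneg a]
    obtain ⟨b, hb⟩ := Int.sq_of_isCoprime hcop1.symm (by rw [mul_comm]; exact hz2)
    have hb2 : c = b ^ 2 := by
      rcases hb with h | h
      · exact h
      · exfalso; nlinarith [sq_nonneg b]
    exact ⟨a, b, by rw [← ha2, ← hb2, ← hc]; ring⟩

/-- Let `p` be a prime with `p ≡ 1 (mod 4)` and `K = ℚ(√p)`. Then there exists
a unit of the ring of integers of `K` of norm `−1` (the fundamental unit has
norm `−1`). -/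
theorem stmt_7 (p : ℕ) (hp : p.Prime) (h4 : p % 4 = 1)
    (K : Type) [Field K] [Algebra ℚ K] (α : K) (hα : α ^ 2 = (p : K))
    (hdim : Module.finrank ℚ K = 2) :
    ∃ ε : (𝓞 K)ˣ, Algebra.norm ℚ ((ε : 𝓞 K) : K) = -1 := by
  haveI : CharZero K := charZero_of_injective_algebraMap (algebraMap ℚ K).injective
  have halg : ‹Algebra ℚ K› = DivisionRing.toRatAlgebra := Subsingleton.elim _ _
  subst halg
  haveI hFD : FiniteDimensional ℚ K := Module.finite_of_finrank_pos (by rw [hdim]; norm_num)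
  haveI : NumberField K := ⟨⟩
  obtain ⟨a, b, hab⟩ := neg_pell p hp h4
  have hnsq : ¬IsSquare ((p : ℚ)) := by
    rw [Rat.isSquare_natCast_iff]
    exact hp.prime.not_isSquare
  have hα0 : α ≠ 0 := by
    intro h
    have hp0 : (p : K) = 0 := by rw [← hα, h]; ring
    have : (p : ℕ) = 0 := by exact_mod_cast hp0
    exact hp.ne_zero this
  have li : LinearIndependent ℚ ![(1 : K), α] := by
    rw [linearIndependent_fin2]
    refine ⟨hα0, fun c hc => ?_⟩
    simp only [Matrix.cons_val_one, Matrix.head_cons, Matrix.cons_val_zero] at hc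
    have hc1 := hc
    have hsq : algebraMap ℚ K (c ^ 2 * p) = 1 := by
      have h1 : (c • α) * (c • α) = 1 := by rw [hc1]; exact one_mul 1
      rw [Algebra.smul_def] at h1
      calc algebraMap ℚ K (c ^ 2 * p)
          = (algebraMap ℚ K c * α) * (algebraMap ℚ K c * α) := by
            rw [map_mul, map_pow, map_natCast, ← hα]; ring
        _ = 1 := h1
    have hpq : c ^ 2 * (p : ℚ) = 1 := by
      apply (algebraMap ℚ K).injective
      rw [hsq, map_one]
    have hc0 : c ≠ 0 := by intro h; rw [h] at hpq; simp at hpq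
    refine hnsq ⟨c⁻¹, ?_⟩
    field_simp
    linarith [hpq]
  let B : Module.Basis (Fin 2) ℚ K :=
    basisOfLinearIndependentOfCardEqFinrank li (by simp [hdim])
  have hB : ⇑B = ![(1 : K), α] := coe_basisOfLinearIndependentOfCardEqFinrank _ _
  have hB0 : B 0 = 1 := by rw [hB]; rfl
  have hB1 : B 1 = α := by rw [hB]; rfl
  have hnorm : ∀ qa qb : ℚ,
      Algebra.norm ℚ (algebraMap ℚ K qa + algebraMap ℚ K qb * α) = qa ^ 2 - p * qb ^ 2 := by
    intro qa qb
    rw [Algebra.norm_eq_matrix_det B]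
    have hrepr : ∀ (c d : ℚ),
        B.repr (c • B 0 + d • B 1) = c • Finsupp.single 0 1 + d • Finsupp.single 1 1 := by
      intro c d
      rw [map_add, map_smul, map_smul, B.repr_self, B.repr_self]
    have e0 : (algebraMap ℚ K qa + algebraMap ℚ K qb * α) * B 0 = qa • B 0 + qb • B 1 := by
      rw [hB0, hB1, mul_one, Algebra.smul_def, Algebra.smul_def, mul_one]
    have e1 : (algebraMap ℚ K qa + algebraMap ℚ K qb * α) * B 1
        = ((p : ℚ) * qb) • B 0 + qa • B 1 := by
      rw [hB0, hB1, Algebra.smul_def, Algebra.smul_def, mul_one, map_mul, map_natCast]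
      have hαα : α * α = (p : K) := by rw [← hα]; ring
      rw [add_mul, mul_assoc, hαα]
      ring
    rw [Matrix.det_fin_two, Algebra.leftMulMatrix_eq_repr_mul,
      Algebra.leftMulMatrix_eq_repr_mul, Algebra.leftMulMatrix_eq_repr_mul,
      Algebra.leftMulMatrix_eq_repr_mul, e0, e1, hrepr, hrepr]
    simp [Finsupp.single_apply]
    ring
  have hαint : IsIntegral ℤ α :=
    ⟨Polynomial.X ^ 2 - Polynomial.C (p : ℤ),
      Polynomial.monic_X_pow_sub_C _ two_ne_zero, by simp [hα]⟩
  have hint : ∀ n : ℤ, IsIntegral ℤ (algebraMap ℚ K (n : ℚ)) := by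
    intro n
    rw [map_intCast]
    exact (eq_intCast (algebraMap ℤ K) n) ▸ isIntegral_algebraMap
  set u : K := algebraMap ℚ K (a : ℚ) + algebraMap ℚ K (b : ℚ) * α with hu
  have huint : IsIntegral ℤ u := (hint a).add ((hint b).mul hαint)
  set U : 𝓞 K := ⟨u, huint⟩ with hU
  have hUnorm : Algebra.norm ℚ (U : K) = -1 := by
    show Algebra.norm ℚ u = -1
    rw [hu, hnorm (a : ℚ) (b : ℚ)]
    exact_mod_cast hab
  have hUunit : IsUnit U := by
    rw [NumberField.isUnit_iff_norm, RingOfIntegers.coe_norm, hUnorm]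
    norm_num
  exact ⟨hUunit.unit, by rw [IsUnit.unit_spec]; exact hUnorm⟩
end

section
/- Let N : I → J, P ≤ I, Q ≤ J with N(P) ⊆ Q as above, and assume all relevant quotients are finite. Let c : Q/N(P) → J/N(I) be the natural map. Then q(c) = |coker c|/|ker c| = q(N'') · [I^{(1)} : P^{(1)}], where I^{(1)} = ker N, P^{(1)} = P ∩ I^{(1)}, and N'' : I/P → J/Q is the induced map. -/
set_option maxHeartbeats 1000000

/-- With `N : I → J`, `P ≤ I`, `Q ≤ J`, `N(P) ⊆ Q`, let
`c : Q/N(P) → J/N(I)` be the natural map and `N'' : I/P → J/Q` the induced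
map. Assuming finiteness of the relevant kernels, cokernels and the index
`[I⁽¹⁾ : P⁽¹⁾]` (where `I⁽¹⁾ = ker N` and `P⁽¹⁾ = P ∩ ker N`), one has
`q(c) = q(N'') · [I⁽¹⁾ : P⁽¹⁾]`, where `q(f) = |coker f|/|ker f|`. -/
theorem stmt_16 {I J : Type*} [CommGroup I] [CommGroup J]
    (N : I →* J) (P : Subgroup I) (Q : Subgroup J)
    (hPQ : ∀ x ∈ P, N x ∈ Q)
    (N'' : (I ⧸ P) →* (J ⧸ Q))
    (hN'' : ∀ a : I, N'' (QuotientGroup.mk a) = QuotientGroup.mk (N a))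
    (c : (↥Q ⧸ (P.map N).subgroupOf Q) →* (J ⧸ N.range))
    (hc : ∀ u : ↥Q, c (QuotientGroup.mk u) = QuotientGroup.mk (u : J))
    (h1 : Finite c.ker) (h2 : Finite ((J ⧸ N.range) ⧸ c.range))
    (h3 : Finite N''.ker) (h4 : Finite ((J ⧸ Q) ⧸ N''.range))
    (h5 : P.relIndex N.ker ≠ 0) :
    (Nat.card ((J ⧸ N.range) ⧸ c.range) : ℚ) / Nat.card c.ker =
      ((Nat.card ((J ⧸ Q) ⧸ N''.range) : ℚ) / Nat.card N''.ker) *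
        (P.relIndex N.ker : ℚ) := by
  classical
  set K : Subgroup J := Q ⊔ N.range with hK
  -- Step A : both cokernels are isomorphic to J ⧸ K
  have hrange_c : c.range = Q.map (QuotientGroup.mk' N.range) := by
    ext x
    constructor
    · rintro ⟨y, rfl⟩
      obtain ⟨u, rfl⟩ := QuotientGroup.mk_surjective y
      exact ⟨u.1, u.2, (hc u).symm⟩
    · rintro ⟨q, hq, rfl⟩
      exact ⟨QuotientGroup.mk ⟨q, hq⟩, hc ⟨q, hq⟩⟩
  have hmapK : K.map (QuotientGroup.mk' N.range) = Q.map (QuotientGroup.mk' N.range) := by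
    have hbot : N.range.map (QuotientGroup.mk' N.range) = ⊥ := by
      simp [Subgroup.map_eq_bot_iff, QuotientGroup.ker_mk']
    rw [hK, Subgroup.map_sup, hbot, sup_bot_eq]
  have hrange_N'' : N''.range = N.range.map (QuotientGroup.mk' Q) := by
    ext x
    constructor
    · rintro ⟨y, rfl⟩
      obtain ⟨a, rfl⟩ := QuotientGroup.mk_surjective y
      rw [hN'']
      exact ⟨N a, ⟨a, rfl⟩, rfl⟩
    · rintro ⟨-, ⟨a, rfl⟩, rfl⟩
      exact ⟨QuotientGroup.mk a, hN'' a⟩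
  have hmapK' : K.map (QuotientGroup.mk' Q) = N.range.map (QuotientGroup.mk' Q) := by
    have hbot : Q.map (QuotientGroup.mk' Q) = ⊥ := by
      simp [Subgroup.map_eq_bot_iff, QuotientGroup.ker_mk']
    rw [hK, Subgroup.map_sup, hbot, bot_sup_eq]
  have hcardA : Nat.card ((J ⧸ N.range) ⧸ c.range) = Nat.card (J ⧸ K) := by
    rw [hrange_c, ← hmapK]
    exact Nat.card_congr
      (QuotientGroup.quotientQuotientEquivQuotient N.range K le_sup_right).toEquiv
  have hcardC : Nat.card ((J ⧸ Q) ⧸ N''.range) = Nat.card (J ⧸ K) := by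
    rw [hrange_N'', ← hmapK']
    exact Nat.card_congr
      (QuotientGroup.quotientQuotientEquivQuotient Q K le_sup_left).toEquiv
  -- Step B : relating the kernels
  set R : Subgroup I := Q.comap N with hR
  have hPR : P ≤ R := fun x hx => hPQ x hx
  have hkerR : N.ker ≤ R := by
    intro x hx
    have : N x = 1 := hx
    show N x ∈ Q
    rw [this]; exact one_mem Q
  let g : ↥R →* ↥Q := (N.domRestrict R).codRestrict Q (fun x => x.2)
  let α : ↥R →* (↥Q ⧸ (P.map N).subgroupOf Q) :=
    (QuotientGroup.mk' ((P.map N).subgroupOf Q)).comp g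
  let β : ↥R →* (I ⧸ P) := (QuotientGroup.mk' P).comp R.subtype
  have hαapp : ∀ x : ↥R, α x = QuotientGroup.mk (g x) := fun x => rfl
  have hgval : ∀ x : ↥R, ((g x : J)) = N x := fun x => rfl
  have hker_c : c.ker = α.range := by
    ext x
    constructor
    · intro hx
      obtain ⟨u, rfl⟩ := QuotientGroup.mk_surjective x
      rw [MonoidHom.mem_ker, hc] at hx
      obtain ⟨a, ha⟩ := (QuotientGroup.eq_one_iff _).mp hx
      have haQ : a ∈ R := by show N a ∈ Q; rw [ha]; exact u.2
      refine ⟨⟨a, haQ⟩, ?_⟩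
      rw [hαapp]
      congr 1
      exact Subtype.ext ha
    · rintro ⟨x, rfl⟩
      rw [MonoidHom.mem_ker, hαapp, hc]
      exact (QuotientGroup.eq_one_iff _).mpr ⟨x.1, rfl⟩
  have hker_N'' : N''.ker = β.range := by
    ext x
    constructor
    · intro hx
      obtain ⟨a, rfl⟩ := QuotientGroup.mk_surjective x
      rw [MonoidHom.mem_ker, hN''] at hx
      exact ⟨⟨a, (QuotientGroup.eq_one_iff (N a)).mp hx⟩, rfl⟩
    · rintro ⟨x, rfl⟩
      rw [MonoidHom.mem_ker]
      show N'' (QuotientGroup.mk x.1) = 1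
      rw [hN'']
      exact (QuotientGroup.eq_one_iff _).mpr x.2
  have hkerβ : β.ker = P.subgroupOf R := by
    ext x
    rw [MonoidHom.mem_ker, Subgroup.mem_subgroupOf]
    show (QuotientGroup.mk x.1 : I ⧸ P) = 1 ↔ _
    rw [QuotientGroup.eq_one_iff]
  have hkerα : α.ker = (P ⊔ N.ker).subgroupOf R := by
    ext x
    rw [MonoidHom.mem_ker, Subgroup.mem_subgroupOf, ← Subgroup.comap_map_eq,
      Subgroup.mem_comap, hαapp, QuotientGroup.eq_one_iff, Subgroup.mem_subgroupOf]
    exact Iff.rfl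
  have hβα : β.ker ≤ α.ker := by
    rw [hkerβ, hkerα]
    intro x hx
    rw [Subgroup.mem_subgroupOf] at hx ⊢
    exact Subgroup.mem_sup_left hx
  have e2 : Nat.card N''.ker = Nat.card (↥R ⧸ β.ker) := by
    rw [hker_N'']
    exact (Nat.card_congr (QuotientGroup.quotientKerEquivRange β).toEquiv).symm
  have e3 : Nat.card c.ker = Nat.card (↥R ⧸ α.ker) := by
    rw [hker_c]
    exact (Nat.card_congr (QuotientGroup.quotientKerEquivRange α).toEquiv).symm
  have hrel : β.ker.relIndex α.ker = P.relIndex N.ker := by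
    rw [hkerβ, hkerα, Subgroup.relIndex_subgroupOf (sup_le hPR hkerR),
      Subgroup.relIndex_sup_left]
  have hmul : β.ker.relIndex α.ker * α.ker.index = β.ker.index :=
    Subgroup.relIndex_mul_index hβα
  have key : Nat.card N''.ker = Nat.card c.ker * P.relIndex N.ker := by
    rw [e2, e3, ← Subgroup.index_eq_card, ← Subgroup.index_eq_card, ← hmul, hrel, mul_comm]
  -- Final arithmetic
  have hB : (Nat.card c.ker : ℚ) ≠ 0 := by
    have : 0 < Nat.card c.ker := Nat.card_pos
    exact_mod_cast this.ne'
  have hr : (P.relIndex N.ker : ℚ) ≠ 0 := Nat.cast_ne_zero.mpr h5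
  rw [hcardA, hcardC, key]
  push_cast
  rw [div_mul_eq_mul_div, div_eq_div_iff hB (mul_ne_zero hB hr)]
  ring
end
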